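/- Let S > 0, K = 1 - S, T = 1, and 0 < b < S. The characteristic polynomial of the Jacobian of the plant–soil system at the equilibrium (b, S-b, b/S, (S-b)/S) is λ⁴ + C₁λ³ + C₂λ² + C₃λ, i.e. it has zero constant term, where C₁ = 2 - 2K, C₂ = b² + b(K-1) + K² - 3K + 2, C₃ = 2b² + 2b(K-1) + (K-1)². -/

import Mathlib

open Polynomial

/-- Jacobian of the plant-soil model with T = 1 evaluated at the degenerate
coexistence equilibrium (b, S-b, b/S, (S-b)/S), with K = 1 - S. -/
noncomputable def Jdeg (K S b : ℝ) : Matrix (Fin 4) (Fin 4) ℝ :=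
  !![1 - (S - b) - b / S - K * ((S - b) / S), -b, -b, -K * b;
     -(S - b), 1 - b - K * (b / S) - (S - b) / S, -K * (S - b), -(S - b);
     1, 0, -S, 0;
     0, 1, 0, -S]

set_option maxHeartbeats 2000000 in
theorem charpoly_degenerate_equilibria (K S b : ℝ) (hS : 0 < S) (hK : K = 1 - S)
    (hb0 : 0 < b) (hbS : b < S) :
    (Jdeg K S b).charpoly =
      X ^ 4 + C (2 - 2 * K) * X ^ 3
        + C (b ^ 2 + b * (K - 1) + K ^ 2 - 3 * K + 2) * X ^ 2
        + C (2 * b ^ 2 + 2 * b * (K - 1) + (K - 1) ^ 2) * X := by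
  have hS0 : S ≠ 0 := hS.ne'
  have hJ : Jdeg K S b =
      !![0, -b, -b, -(K * b);
         -(S - b), 0, -(K * (S - b)), -(S - b);
         1, 0, -S, 0;
         0, 1, 0, -S] := by
    subst hK
    ext i j
    fin_cases i <;> fin_cases j <;> (simp [Jdeg]; try ring; try (field_simp; try ring))
  have hcm : (Jdeg K S b).charmatrix =
      !![X, C b, C b, C (K * b);
         C (S - b), X, C (K * (S - b)), C (S - b);
         -1, 0, X + C S, 0;
         0, -1, 0, X + C S] := by
    rw [hJ]
    ext i j : 2
    fin_cases i <;> fin_cases j <;>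
      simp [Matrix.charmatrix_apply, Matrix.one_apply, Matrix.diagonal]
  rw [Matrix.charpoly, hcm]
  simp [Matrix.det_succ_row_zero, Fin.sum_univ_succ, Fin.succAbove, Fin.castSucc,
    Fin.castAdd, Fin.castLE]
  subst hK
  simp only [map_sub, map_add, map_mul, map_neg, map_pow, map_one, map_ofNat]
  ring
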